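/- Let X be a real random variable with E[X] = 0 and |X| ≤ D almost surely for some D ≥ 0. Then for every real λ with |λ|·D < 3, E[exp(λX)] ≤ exp( (λ²·Var[X]/2) / (1 − |λ|D/3) ). -/

import Mathlib

open MeasureTheory ProbabilityTheory

lemma fact_ge_aux (n : ℕ) : 2 * 3 ^ n ≤ (n + 2).factorial := by
  induction n with
  | zero => simp [Nat.factorial]
  | succ n ih =>
    calc 2 * 3 ^ (n + 1) = 3 * (2 * 3 ^ n) := by ring
    _ ≤ (n + 3) * (n + 2).factorial := Nat.mul_le_mul (by omega) ih
    _ = (n + 3).factorial := rfl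

lemma exp_aux (u : ℝ) (hu : |u| < 3) :
    Real.exp u ≤ 1 + u + u ^ 2 / 2 / (1 - |u| / 3) := by
  have hq : |u| / 3 < 1 := by linarith
  have hq0 : 0 ≤ |u| / 3 := by positivity
  have hsumm : Summable (fun n : ℕ => u ^ n / n.factorial) :=
    Real.summable_pow_div_factorial u
  have hsumm2 : Summable (fun n : ℕ => u ^ (n + 2) / (n + 2).factorial) :=
    (summable_nat_add_iff 2).2 hsumm
  have hg : Summable (fun n : ℕ => u ^ 2 / 2 * (|u| / 3) ^ n) :=
    (summable_geometric_of_lt_one hq0 hq).mul_left _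
  have hexp : Real.exp u = ∑' n : ℕ, u ^ n / n.factorial := by
    rw [Real.exp_eq_exp_ℝ, NormedSpace.exp_eq_tsum_div]
  have hsplit : Real.exp u = 1 + u + ∑' n : ℕ, u ^ (n + 2) / (n + 2).factorial := by
    rw [hexp, ← Summable.sum_add_tsum_nat_add' (f := fun n : ℕ => u ^ n / n.factorial) (k := 2) hsumm2]
    simp [Finset.sum_range_succ, Nat.factorial]
  rw [hsplit]
  have hterm : ∀ n : ℕ, u ^ (n + 2) / (n + 2).factorial ≤ u ^ 2 / 2 * (|u| / 3) ^ n := by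
    intro n
    have h1 : u ^ (n + 2) ≤ |u| ^ (n + 2) := by
      calc u ^ (n + 2) ≤ |u ^ (n + 2)| := le_abs_self _
      _ = |u| ^ (n + 2) := abs_pow u _
    have h2 : (2 * 3 ^ n : ℝ) ≤ ((n + 2).factorial : ℝ) := by
      exact_mod_cast fact_ge_aux n
    have h3 : (0 : ℝ) < 2 * 3 ^ n := by positivity
    calc u ^ (n + 2) / (n + 2).factorial ≤ |u| ^ (n + 2) / (2 * 3 ^ n) := by
          exact div_le_div₀ (by positivity) h1 h3 h2
      _ = u ^ 2 / 2 * (|u| / 3) ^ n := by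
          rw [div_pow, pow_add, ← sq_abs u]
          ring
  calc 1 + u + ∑' n : ℕ, u ^ (n + 2) / (n + 2).factorial
      ≤ 1 + u + ∑' n : ℕ, u ^ 2 / 2 * (|u| / 3) ^ n := by
        gcongr
        exact hterm _
    _ = 1 + u + u ^ 2 / 2 / (1 - |u| / 3) := by
        rw [tsum_mul_left, tsum_geometric_of_lt_one hq0 hq]
        ring

/-- A centered random variable bounded by `D` satisfies the `(D, Var[X])`-Bernstein condition:
for every `λ` with `|λ|·D < 3`, `E[exp(λX)] ≤ exp((λ²·Var[X]/2)/(1 − |λ|D/3))`. -/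
theorem stmt2 {Ω : Type*} {mΩ : MeasurableSpace Ω} (μ : Measure Ω)
    [IsProbabilityMeasure μ]
    (X : Ω → ℝ) (hXmeas : Measurable X)
    (D : ℝ) (hD : 0 ≤ D)
    (hmean : ∫ ω, X ω ∂μ = 0)
    (hbdd : ∀ᵐ ω ∂μ, |X ω| ≤ D)
    (L : ℝ) (hL : |L| * D < 3) :
    ∫ ω, Real.exp (L * X ω) ∂μ ≤
      Real.exp (L ^ 2 * variance X μ / 2 / (1 - |L| * D / 3)) := by
  have hden : 0 < 1 - |L| * D / 3 := by linarith
  set c : ℝ := L ^ 2 / 2 / (1 - |L| * D / 3) with hc_def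
  have hc0 : 0 ≤ c := by positivity
  -- integrability facts
  have hX_int : Integrable X μ :=
    (integrable_const D).mono' hXmeas.aestronglyMeasurable
      (hbdd.mono fun ω h => by simpa using h)
  have hX2_int : Integrable (fun ω => (X ω) ^ 2) μ :=
    (integrable_const (D ^ 2)).mono' (hXmeas.pow_const 2).aestronglyMeasurable
      (hbdd.mono fun ω h => by
        rw [Real.norm_eq_abs, abs_pow]
        exact pow_le_pow_left₀ (abs_nonneg _) h 2)
  have hexp_int : Integrable (fun ω => Real.exp (L * X ω)) μ :=
    (integrable_const (Real.exp (|L| * D))).mono'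
      ((Real.measurable_exp.comp (hXmeas.const_mul L)).aestronglyMeasurable)
      (hbdd.mono fun ω h => by
        rw [Real.norm_eq_abs, abs_of_pos (Real.exp_pos _), Real.exp_le_exp]
        calc L * X ω ≤ |L * X ω| := le_abs_self _
          _ = |L| * |X ω| := abs_mul _ _
          _ ≤ |L| * D := by gcongr)
  have hrhs_int : Integrable (fun ω => 1 + L * X ω + c * (X ω) ^ 2) μ :=
    ((integrable_const 1).add (hX_int.const_mul L)).add (hX2_int.const_mul c)
  -- pointwise bound
  have hptw : ∀ᵐ ω ∂μ, Real.exp (L * X ω) ≤ 1 + L * X ω + c * (X ω) ^ 2 := by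
    filter_upwards [hbdd] with ω h
    have habs : |L * X ω| ≤ |L| * D := by
      rw [abs_mul]; gcongr
    have h3 : |L * X ω| < 3 := lt_of_le_of_lt habs hL
    have h1 := exp_aux (L * X ω) h3
    have hden2 : 0 < 1 - |L * X ω| / 3 := by linarith
    have h2 : (L * X ω) ^ 2 / 2 / (1 - |L * X ω| / 3) ≤ c * (X ω) ^ 2 := by
      have hle : (L * X ω) ^ 2 / 2 / (1 - |L * X ω| / 3) ≤
          (L * X ω) ^ 2 / 2 / (1 - |L| * D / 3) := by
        apply div_le_div_of_nonneg_left (by positivity) hden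
        linarith
      calc (L * X ω) ^ 2 / 2 / (1 - |L * X ω| / 3)
          ≤ (L * X ω) ^ 2 / 2 / (1 - |L| * D / 3) := hle
        _ = c * (X ω) ^ 2 := by rw [hc_def]; ring
    linarith
  -- integrate
  have hint : ∫ ω, Real.exp (L * X ω) ∂μ ≤ ∫ ω, (1 + L * X ω + c * (X ω) ^ 2) ∂μ :=
    integral_mono_ae hexp_int hrhs_int hptw
  have hvar : variance X μ = ∫ ω, (X ω) ^ 2 ∂μ := by
    have hmem : MemLp X 2 μ :=
      MemLp.of_bound hXmeas.aestronglyMeasurable D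
        (hbdd.mono fun ω h => by simpa using h)
    rw [variance_eq_sub hmem, hmean]
    simp [Pi.pow_apply]
  have hcalc : ∫ ω, (1 + L * X ω + c * (X ω) ^ 2) ∂μ = 1 + c * variance X μ := by
    have h1 : Integrable (fun ω => 1 + L * X ω) μ := by
      exact (integrable_const 1).add (hX_int.const_mul L)
    have h2 : Integrable (fun ω => (1 : ℝ)) μ := integrable_const 1
    have h3 : Integrable (fun ω => L * X ω) μ := hX_int.const_mul L
    rw [integral_add h1 (hX2_int.const_mul c), integral_add h2 h3,
      integral_const, integral_const_mul, integral_const_mul, hmean, hvar]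
    simp
  have hfinal : 1 + c * variance X μ ≤
      Real.exp (L ^ 2 * variance X μ / 2 / (1 - |L| * D / 3)) := by
    have heq : c * variance X μ = L ^ 2 * variance X μ / 2 / (1 - |L| * D / 3) := by
      rw [hc_def]; ring
    rw [heq]
    linarith [Real.add_one_le_exp (L ^ 2 * variance X μ / 2 / (1 - |L| * D / 3))]
  calc ∫ ω, Real.exp (L * X ω) ∂μ ≤ ∫ ω, (1 + L * X ω + c * (X ω) ^ 2) ∂μ := hint
    _ = 1 + c * variance X μ := hcalc
    _ ≤ _ := hfinal
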